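/- Let H be a stable transfer function and H_r(s) = Σᵢ₌₁ʳ ℓᵢrᵢᵀ/(s − λᵢ) with distinct stable poles λᵢ. Define J = ‖H − H_r‖²_{H₂} as a function of the variables (λᵢ, ℓᵢ, rᵢ). Then the partial derivative of J with respect to λᵢ equals ∂J/∂λᵢ = −2 ℓᵢᵀ (H_r'(−λᵢ) − H'(−λᵢ)) rᵢ. -/

import Mathlib

open Matrix
open scoped Matrix

/-- Derivative of the H₂ error functional with respect to the pole `λᵢ`
(holding residue directions fixed), computed from the pole-residue error expansion
`J = ‖H‖² - 2 Σ_k ℓ_kᵀ H(-λ_k) r_k + Σ_{k,l} (ℓ_kᵀℓ_l)(r_lᵀr_k)/(-λ_k - λ_l)`: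
`∂J/∂λᵢ = -2 ℓᵢᵀ (H_r'(-λᵢ) - H'(-λᵢ)) rᵢ`, where
`H_r'(s) = -Σ_j ℓ_j r_jᵀ/(s - λ_j)²`. -/
theorem h2_error_deriv_wrt_pole
    {p m rr : ℕ}
    (H H' : ℂ → Matrix (Fin p) (Fin m) ℂ)
    (lam : Fin rr → ℂ) (ls : Fin rr → Fin p → ℂ) (rs : Fin rr → Fin m → ℂ)
    (hdist : Function.Injective lam)
    (hre : ∀ k, (lam k).re < 0)
    (i : Fin rr)
    (hH' : ∀ a b, HasDerivAt (fun z => H z a b) (H' (-(lam i)) a b) (-(lam i)))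
    (Hr' : ℂ → Matrix (Fin p) (Fin m) ℂ)
    (hHr' : ∀ s, Hr' s = -∑ j, ((s - lam j) ^ 2)⁻¹ • vecMulVec (ls j) (rs j))
    (c : ℝ) :
    HasDerivAt
      (fun t : ℂ =>
        (c : ℂ)
          - 2 * ∑ k, ls k ⬝ᵥ (H (-(Function.update lam i t k)) *ᵥ rs k)
          + ∑ k, ∑ l, (ls k ⬝ᵥ ls l) * (rs l ⬝ᵥ rs k) /
              (-(Function.update lam i t k) - Function.update lam i t l))
      (-2 * (ls i ⬝ᵥ ((Hr' (-(lam i)) - H' (-(lam i))) *ᵥ rs i)))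
      (lam i) := by
  classical
  set t0 := lam i with ht0
  -- denominators are nonzero
  have hne : ∀ k l : Fin rr, (-(lam k) - lam l) ≠ 0 := by
    intro k l h
    have := congrArg Complex.re h
    simp [Complex.sub_re, Complex.neg_re] at this
    linarith [hre k, hre l]
  -- derivative of update
  have hupd : ∀ k : Fin rr,
      HasDerivAt (fun t : ℂ => Function.update lam i t k)
        (if k = i then 1 else 0) t0 := by
    intro k
    by_cases hk : k = i
    · subst hk
      simp only [Function.update_self, if_pos rfl]
      exact hasDerivAt_id t0
    · simp only [Function.update_of_ne hk, if_neg hk]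
      exact hasDerivAt_const t0 _
  -- derivative of first-sum terms
  have h1 : ∀ k : Fin rr,
      HasDerivAt (fun t : ℂ => ls k ⬝ᵥ (H (-(Function.update lam i t k)) *ᵥ rs k))
        (if k = i then -(ls i ⬝ᵥ (H' (-t0) *ᵥ rs i)) else 0) t0 := by
    intro k
    by_cases hk : k = i
    · subst hk
      simp only [Function.update_self, if_pos rfl]
      have hent : ∀ a b, HasDerivAt (fun t : ℂ => H (-t) a b) (-(H' (-t0) a b)) t0 := by
        intro a b
        have h := (hH' a b).comp t0 (hasDerivAt_neg t0)
        simpa [mul_comm, Function.comp_def] using h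
      have hsum : HasDerivAt (fun t : ℂ => ∑ a, ls k a * ∑ b, H (-t) a b * rs k b)
          (∑ a, ls k a * ∑ b, -(H' (-t0) a b) * rs k b) t0 := by
        apply HasDerivAt.fun_sum
        intro a _
        apply HasDerivAt.const_mul
        apply HasDerivAt.fun_sum
        intro b _
        exact (hent a b).mul_const _
      have heq : (fun t : ℂ => ls k ⬝ᵥ (H (-t) *ᵥ rs k))
          = fun t : ℂ => ∑ a, ls k a * ∑ b, H (-t) a b * rs k b := by
        funext t; simp [dotProduct, mulVec]
      rw [heq]
      convert hsum using 1
      simp [dotProduct, mulVec, Finset.mul_sum, Finset.sum_neg_distrib]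
    · simp only [Function.update_of_ne hk, if_neg hk]
      exact hasDerivAt_const t0 _
  -- derivative of second-sum terms
  have h2 : ∀ k l : Fin rr,
      HasDerivAt (fun t : ℂ => (ls k ⬝ᵥ ls l) * (rs l ⬝ᵥ rs k) /
          (-(Function.update lam i t k) - Function.update lam i t l))
        (((if k = i then 1 else 0) + (if l = i then 1 else 0)) *
          ((ls k ⬝ᵥ ls l) * (rs l ⬝ᵥ rs k)) / (-(lam k) - lam l) ^ 2) t0 := by
    intro k l
    have hg : HasDerivAt (fun t : ℂ => -(Function.update lam i t k) - Function.update lam i t l)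
        (-(if k = i then 1 else 0) - (if l = i then 1 else 0)) t0 := ((hupd k).neg).sub (hupd l)
    have hg0 : (-(Function.update lam i t0 k) - Function.update lam i t0 l) ≠ 0 := by
      simp only [ht0, Function.update_eq_self]
      exact hne k l
    have hdiv := (hasDerivAt_const t0 ((ls k ⬝ᵥ ls l) * (rs l ⬝ᵥ rs k))).div hg hg0
    refine hdiv.congr_deriv ?_
    simp only [ht0, Function.update_eq_self]
    field_simp
    ring
  -- combine
  have hS1 : HasDerivAt
      (fun t : ℂ => ∑ k, ls k ⬝ᵥ (H (-(Function.update lam i t k)) *ᵥ rs k))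
      (∑ k, if k = i then -(ls i ⬝ᵥ (H' (-t0) *ᵥ rs i)) else 0) t0 :=
    HasDerivAt.fun_sum (fun k _ => h1 k)
  have hS2 : HasDerivAt
      (fun t : ℂ => ∑ k, ∑ l, (ls k ⬝ᵥ ls l) * (rs l ⬝ᵥ rs k) /
          (-(Function.update lam i t k) - Function.update lam i t l))
      (∑ k, ∑ l, ((if k = i then (1:ℂ) else 0) + (if l = i then 1 else 0)) *
          ((ls k ⬝ᵥ ls l) * (rs l ⬝ᵥ rs k)) / (-(lam k) - lam l) ^ 2) t0 :=
    HasDerivAt.fun_sum (fun k _ => HasDerivAt.fun_sum (fun l _ => h2 k l))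
  have htotal := ((hasDerivAt_const t0 (c : ℂ)).sub (hS1.const_mul 2)).add hS2
  refine htotal.congr_deriv ?_
  -- value equality
  have hHrval : ls i ⬝ᵥ (Hr' (-(lam i)) *ᵥ rs i)
      = -∑ j, ((-(lam i) - lam j) ^ 2)⁻¹ * ((ls i ⬝ᵥ ls j) * (rs j ⬝ᵥ rs i)) := by
    have hentry : ∀ a b, Hr' (-(lam i)) a b
        = -∑ j, ((-(lam i) - lam j) ^ 2)⁻¹ * (ls j a * rs j b) := by
      intro a b
      rw [hHr']
      simp [Matrix.sum_apply, Matrix.vecMulVec_apply]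
    simp only [dotProduct, mulVec, hentry]
    simp only [neg_mul, mul_neg, Finset.mul_sum, Finset.sum_mul, Finset.sum_neg_distrib,
      dotProduct]
    congr 1
    conv_lhs => enter [2, a]; rw [Finset.sum_comm]
    rw [Finset.sum_comm]
    refine Finset.sum_congr rfl fun j _ => ?_
    rw [Finset.sum_comm]
    exact Finset.sum_congr rfl fun b _ => Finset.sum_congr rfl fun a _ => by ring
  have pull1 : ∀ (f : Fin rr → Fin rr → ℂ),
      (∑ k, ∑ l, if k = i then f k l else 0) = ∑ l, f i l := by
    intro f
    have h : ∀ k : Fin rr, (∑ l, if k = i then f k l else 0)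
        = if k = i then ∑ l, f k l else 0 := by
      intro k; split <;> simp
    simp only [h]
    simp [Finset.sum_ite_eq']
  have pull2 : ∀ (f : Fin rr → Fin rr → ℂ),
      (∑ k, ∑ l, if l = i then f k l else 0) = ∑ k, f k i := by
    intro f
    simp [Finset.sum_ite_eq']
  -- split the double sum of derivatives
  have hsplit : ∑ k, ∑ l, ((if k = i then (1:ℂ) else 0) + (if l = i then 1 else 0)) *
        ((ls k ⬝ᵥ ls l) * (rs l ⬝ᵥ rs k)) / (-(lam k) - lam l) ^ 2
      = 2 * ∑ j, ((-(lam i) - lam j) ^ 2)⁻¹ * ((ls i ⬝ᵥ ls j) * (rs j ⬝ᵥ rs i)) := by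
    have hterm : ∀ k l : Fin rr,
        ((if k = i then (1:ℂ) else 0) + (if l = i then 1 else 0)) *
          ((ls k ⬝ᵥ ls l) * (rs l ⬝ᵥ rs k)) / (-(lam k) - lam l) ^ 2
        = (if k = i then ((ls k ⬝ᵥ ls l) * (rs l ⬝ᵥ rs k)) / (-(lam k) - lam l) ^ 2 else 0)
          + (if l = i then ((ls k ⬝ᵥ ls l) * (rs l ⬝ᵥ rs k)) / (-(lam k) - lam l) ^ 2 else 0) := by
      intro k l
      by_cases hk : k = i <;> by_cases hl : l = i <;> simp [hk, hl] <;> ring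
    simp only [hterm, Finset.sum_add_distrib]
    rw [pull1 (fun k l => ((ls k ⬝ᵥ ls l) * (rs l ⬝ᵥ rs k)) / (-(lam k) - lam l) ^ 2),
      pull2 (fun k l => ((ls k ⬝ᵥ ls l) * (rs l ⬝ᵥ rs k)) / (-(lam k) - lam l) ^ 2), two_mul]
    congr 1
    · apply Finset.sum_congr rfl
      intro j _
      rw [div_eq_inv_mul]
    · apply Finset.sum_congr rfl
      intro j _
      rw [div_eq_inv_mul, dotProduct_comm (ls j), dotProduct_comm (rs i)]
      congr 2
      ring
  rw [hsplit]
  have hsum1 : (∑ k : Fin rr, if k = i then -(ls i ⬝ᵥ (H' (-t0) *ᵥ rs i)) else 0)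
      = -(ls i ⬝ᵥ (H' (-t0) *ᵥ rs i)) := by
    simp [Finset.sum_ite_eq']
  rw [hsum1]
  rw [Matrix.sub_mulVec, dotProduct_sub, hHrval, ht0]
  ring
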